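/- If q is a prime power and V is an n-dimensional F_q-vector space, then the number of subspaces of V, denoted G_n, satisfies the recursion G_{n+1} = 2G_n + (q^n - 1)G_{n-1} for n ≥ 1. -/

import Mathlib

open Module Submodule

set_option linter.unusedSectionVars false

private lemma finite_of_fd {F : Type*} [Field F] [Fintype F] {V : Type*} [AddCommGroup V]
    [Module F V] [FiniteDimensional F V] : Finite V :=
  Finite.of_equiv _ (Module.finBasis F V).equivFun.symm.toEquiv

section Split
variable {F : Type*} [Field F]
variable {V : Type*} [AddCommGroup V] [Module F V]
variable (φ : V →ₗ[F] F) (e₀ : V)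

private noncomputable def gfun (U : Submodule F (LinearMap.ker φ))
    (c : LinearMap.ker φ ⧸ U) : Submodule F V :=
  U.map (LinearMap.ker φ).subtype ⊔ (F ∙ (((Quotient.out c : LinearMap.ker φ) : V) + e₀))

private lemma mem_gfun {U : Submodule F (LinearMap.ker φ)} {c : LinearMap.ker φ ⧸ U} {x : V} :
    x ∈ gfun φ e₀ U c ↔
    ∃ u ∈ U, ∃ a : F, x = ↑u + a • (((Quotient.out c : LinearMap.ker φ) : V) + e₀) := by
  simp only [gfun, Submodule.mem_sup, Submodule.mem_map, Submodule.mem_span_singleton]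
  constructor
  · rintro ⟨y, ⟨u, hu, rfl⟩, z, ⟨a, rfl⟩, rfl⟩; exact ⟨u, hu, a, rfl⟩
  · rintro ⟨u, hu, a, rfl⟩; exact ⟨u, ⟨u, hu, rfl⟩, _, ⟨a, rfl⟩, rfl⟩

variable (he : φ e₀ = 1)
include he

private lemma gfun_not_le (U : Submodule F (LinearMap.ker φ)) (c : LinearMap.ker φ ⧸ U) :
    ¬ gfun φ e₀ U c ≤ LinearMap.ker φ := by
  intro hle
  have hmem : ((Quotient.out c : LinearMap.ker φ) : V) + e₀ ∈ gfun φ e₀ U c :=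
    (mem_gfun φ e₀).2 ⟨0, U.zero_mem, 1, by simp⟩
  have := hle hmem
  rw [LinearMap.mem_ker, map_add, he, (Quotient.out c : LinearMap.ker φ).2] at this
  simpa using this

private lemma comap_gfun (U : Submodule F (LinearMap.ker φ)) (c : LinearMap.ker φ ⧸ U) :
    (gfun φ e₀ U c).comap (LinearMap.ker φ).subtype = U := by
  ext x
  simp only [Submodule.mem_comap, Submodule.coe_subtype]
  constructor
  · intro hx
    obtain ⟨u, hu, a, hxa⟩ := (mem_gfun φ e₀).1 hx
    have h0 : φ (x : V) = 0 := x.2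
    have h0' : φ (u : V) = 0 := u.2
    have h0'' : φ ((Quotient.out c : LinearMap.ker φ) : V) = 0 := (Quotient.out c).2
    rw [hxa, map_add, map_smul, map_add, h0', h0'', he] at h0
    simp only [zero_add, smul_eq_mul, mul_one] at h0
    rw [h0, zero_smul, add_zero] at hxa
    have : x = u := Subtype.ext hxa
    rwa [this]
  · intro hx
    exact (mem_gfun φ e₀).2 ⟨x, hx, 0, by simp⟩

private lemma mk_gfun (U : Submodule F (LinearMap.ker φ)) (c : LinearMap.ker φ ⧸ U)
    {w : V} (hw : w ∈ gfun φ e₀ U c) (hφw : φ w = 1) (hmem : w - e₀ ∈ LinearMap.ker φ) :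
    Submodule.Quotient.mk (⟨w - e₀, hmem⟩ : LinearMap.ker φ) = c := by
  obtain ⟨u, hu, a, rfl⟩ := (mem_gfun φ e₀).1 hw
  have h0' : φ (u : V) = 0 := u.2
  have h0'' : φ ((Quotient.out c : LinearMap.ker φ) : V) = 0 := (Quotient.out c).2
  simp only [map_add, map_smul, h0', h0'', he, smul_eq_mul, zero_add, mul_one] at hφw
  subst hφw
  have hx : (⟨↑u + 1 • (↑(Quotient.out c) + e₀) - e₀, hmem⟩ : LinearMap.ker φ)
      = u + Quotient.out c := by
    apply Subtype.ext
    push_cast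
    rw [one_smul]
    abel
  rw [hx, Submodule.Quotient.mk_add, (Submodule.Quotient.mk_eq_zero U).2 hu, zero_add]
  exact Quotient.out_eq c

end Split

section More
variable {F : Type*} [Field F] [Fintype F]
variable {V : Type*} [AddCommGroup V] [Module F V]
variable (φ : V →ₗ[F] F) (e₀ : V) (he : φ e₀ = 1)
include he

private lemma gfun_surj {W : Submodule F V} (hW : ¬ W ≤ LinearMap.ker φ) :
    ∃ U c, gfun φ e₀ U c = W := by
  obtain ⟨w₀, hw₀W, hw₀⟩ := SetLike.not_le_iff_exists.1 hW
  rw [LinearMap.mem_ker] at hw₀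
  set v : V := (φ w₀)⁻¹ • w₀ with hv
  have hvW : v ∈ W := W.smul_mem _ hw₀W
  have hφv : φ v = 1 := by rw [hv, map_smul, smul_eq_mul, inv_mul_cancel₀ hw₀]
  have hvH : v - e₀ ∈ LinearMap.ker φ := by
    rw [LinearMap.mem_ker, map_sub, hφv, he, sub_self]
  set U : Submodule F (LinearMap.ker φ) := W.comap (LinearMap.ker φ).subtype with hU
  set c : LinearMap.ker φ ⧸ U := Submodule.Quotient.mk ⟨v - e₀, hvH⟩ with hc
  refine ⟨U, c, ?_⟩
  have hout : Quotient.out c - ⟨v - e₀, hvH⟩ ∈ U := by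
    rw [← Submodule.Quotient.eq]
    exact Quotient.out_eq c
  have houtW : ((Quotient.out c : LinearMap.ker φ) : V) + e₀ ∈ W := by
    have h1 : ((Quotient.out c - ⟨v - e₀, hvH⟩ : LinearMap.ker φ) : V) ∈ W := hout
    have h2 : ((Quotient.out c : LinearMap.ker φ) : V) + e₀
        = ((Quotient.out c - ⟨v - e₀, hvH⟩ : LinearMap.ker φ) : V) + v := by
      push_cast; abel
    rw [h2]; exact W.add_mem h1 hvW
  have hvg : v ∈ gfun φ e₀ U c := by
    refine (mem_gfun φ e₀).2 ⟨-(Quotient.out c - ⟨v - e₀, hvH⟩), U.neg_mem hout, 1, ?_⟩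
    push_cast; rw [one_smul]; abel
  apply le_antisymm
  · rw [gfun]
    apply sup_le
    · rintro x ⟨u, hu, rfl⟩; exact hu
    · rw [Submodule.span_le, Set.singleton_subset_iff]; exact houtW
  · intro x hxW
    have hsplit : x = (x - φ x • v) + φ x • v := by abel
    have hker : x - φ x • v ∈ LinearMap.ker φ := by
      rw [LinearMap.mem_ker, map_sub, map_smul, hφv, smul_eq_mul, mul_one, sub_self]
    have hWk : x - φ x • v ∈ W := W.sub_mem hxW (W.smul_mem _ hvW)
    have h1 : x - φ x • v ∈ gfun φ e₀ U c := by
      rw [gfun]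
      exact le_sup_left (α := Submodule F V) ⟨⟨x - φ x • v, hker⟩, hWk, rfl⟩
    rw [hsplit]
    exact (gfun φ e₀ U c).add_mem h1 ((gfun φ e₀ U c).smul_mem _ hvg)

private noncomputable def splitEquiv :
    (Σ U : Submodule F (LinearMap.ker φ), LinearMap.ker φ ⧸ U) ≃
      {W : Submodule F V // ¬ W ≤ LinearMap.ker φ} := by
  apply Equiv.ofBijective (fun p => ⟨gfun φ e₀ p.1 p.2, gfun_not_le φ e₀ he p.1 p.2⟩)
  constructor
  · rintro ⟨U, c⟩ ⟨U', c'⟩ hEq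
    have hg : gfun φ e₀ U c = gfun φ e₀ U' c' := congrArg Subtype.val hEq
    have hU : U = U' := by
      rw [← comap_gfun φ e₀ he U c, ← comap_gfun φ e₀ he U' c', hg]
    subst hU
    have hwmem : ((Quotient.out c : LinearMap.ker φ) : V) + e₀ ∈ gfun φ e₀ U c :=
      (mem_gfun φ e₀).2 ⟨0, U.zero_mem, 1, by simp⟩
    have hφw : φ (((Quotient.out c : LinearMap.ker φ) : V) + e₀) = 1 := by
      rw [map_add, (Quotient.out c : LinearMap.ker φ).2, he, zero_add]
    have hmem : ((Quotient.out c : LinearMap.ker φ) : V) + e₀ - e₀ ∈ LinearMap.ker φ := by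
      simpa using (Quotient.out c : LinearMap.ker φ).2
    have h1 := mk_gfun φ e₀ he U c hwmem hφw hmem
    have h2 := mk_gfun φ e₀ he U c' (hg ▸ hwmem) hφw hmem
    have hcc : c = c' := by rw [← h1]; exact h2
    rw [hcc]
  · rintro ⟨W, hW⟩
    obtain ⟨U, c, hUc⟩ := gfun_surj φ e₀ he hW
    exact ⟨⟨U, c⟩, Subtype.ext hUc⟩

private lemma card_split [FiniteDimensional F V] :
    Nat.card (Submodule F V) =
      Nat.card (Submodule F (LinearMap.ker φ)) +
        Nat.card (Σ U : Submodule F (LinearMap.ker φ), LinearMap.ker φ ⧸ U) := by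
  classical
  have : Finite V := finite_of_fd (F := F)
  have : Finite (Submodule F V) :=
    Finite.of_injective _ (SetLike.coe_injective (A := Submodule F V))
  rw [← Nat.card_congr (Equiv.sumCompl (fun W : Submodule F V => W ≤ LinearMap.ker φ)),
    Nat.card_sum]
  congr 1
  · exact (Nat.card_congr (Submodule.MapSubtype.orderIso (LinearMap.ker φ)).toEquiv).symm
  · exact (Nat.card_congr (splitEquiv φ e₀ he)).symm

end More


section Dual
variable {F : Type*} [Field F]
variable {V : Type*} [AddCommGroup V] [Module F V] [FiniteDimensional F V]

private lemma finrank_dualAnnihilator (U : Submodule F V) :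
    finrank F U.dualAnnihilator = finrank F V - finrank F U := by
  have h1 : finrank F (V ⧸ U) = finrank F U.dualAnnihilator :=
    LinearEquiv.finrank_eq (Subspace.quotEquivAnnihilator U)
  have h2 := Submodule.finrank_quotient_add_finrank U
  have h3 := U.finrank_le
  omega

private noncomputable def annEquiv :
    Submodule F V ≃ Submodule F (Module.Dual F V) where
  toFun := Submodule.dualAnnihilator
  invFun := Submodule.dualCoannihilator
  left_inv U := Subspace.dualAnnihilator_dualCoannihilator_eq
  right_inv Φ := by
    have hle : Φ ≤ Φ.dualCoannihilator.dualAnnihilator :=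
      Submodule.le_dualAnnihilator_iff_le_dualCoannihilator.2 le_rfl
    refine (Submodule.eq_of_le_of_finrank_le hle ?_).symm
    have h1 := finrank_dualAnnihilator Φ.dualCoannihilator
    have h2 := Subspace.finrank_add_finrank_dualCoannihilator_eq Φ
    have h3 : finrank F (Module.Dual F V) = finrank F V := Subspace.dual_finrank_eq
    omega

private lemma card_sigma_quot :
    Nat.card (Σ U : Submodule F V, V ⧸ U) =
      Nat.card (Σ U : Submodule F V, U) := by
  have e1 : (Σ U : Submodule F V, V ⧸ U) ≃ (Σ Φ : Submodule F (Module.Dual F V), Φ) :=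
    Equiv.sigmaCongr (annEquiv (F := F) (V := V))
      (fun U => (Subspace.quotEquivAnnihilator U).toEquiv)
  rw [Nat.card_congr e1]
  exact (Nat.card_congr (Equiv.sigmaCongr
    (Submodule.orderIsoMapComap (Module.finBasis F V).toDualEquiv.symm).toEquiv
    (fun U => ((Module.finBasis F V).toDualEquiv.symm.submoduleMap U).toEquiv)))

end Dual


set_option linter.unusedSectionVars false


section Pairs
variable {F : Type*} [Field F] [Fintype F]
variable {V : Type*} [AddCommGroup V] [Module F V] [FiniteDimensional F V]

private lemma card_submodule_finrank (G : ℕ → ℕ)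
    (hG : ∀ k, G k = Nat.card (Submodule F (Fin k → F))) {k : ℕ} (hk : finrank F V = k) :
    Nat.card (Submodule F V) = G k := by
  rw [hG k]
  exact Nat.card_congr (Submodule.orderIsoMapComap
    (Module.finBasisOfFinrankEq F V hk).equivFun).toEquiv

private lemma card_subs_containing {v : V} (hv : v ≠ 0) (G : ℕ → ℕ)
    (hG : ∀ k, G k = Nat.card (Submodule F (Fin k → F))) :
    Nat.card {U : Submodule F V // v ∈ U} = G (finrank F V - 1) := by
  have e1 : {U : Submodule F V // v ∈ U} ≃ {U : Submodule F V // (F ∙ v) ≤ U} :=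
    Equiv.subtypeEquivRight (fun U => (Submodule.span_singleton_le_iff_mem v U).symm)
  have e2 : Submodule F (V ⧸ (F ∙ v)) ≃ {U : Submodule F V // (F ∙ v) ≤ U} :=
    (Submodule.comapMkQRelIso (F ∙ v)).toEquiv
  rw [Nat.card_congr (e1.trans e2.symm)]
  apply card_submodule_finrank G hG
  have h1 := Submodule.finrank_quotient_add_finrank (F ∙ v)
  rw [finrank_span_singleton hv] at h1
  omega

private lemma card_sigma_self (G : ℕ → ℕ)
    (hG : ∀ k, G k = Nat.card (Submodule F (Fin k → F))) :
    Nat.card (Σ U : Submodule F V, U) =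
      Nat.card (Submodule F V)
        + (Fintype.card F ^ finrank F V - 1) * G (finrank F V - 1) := by
  classical
  have : Finite V := finite_of_fd (F := F)
  have : Finite (Submodule F V) :=
    Finite.of_injective _ (SetLike.coe_injective (A := Submodule F V))
  letI : Fintype V := Fintype.ofFinite V
  -- split each fiber by whether the element is zero
  have e0 : (Σ U : Submodule F V, U) ≃
      (Σ U : Submodule F V, {u : U // (u : V) = 0} ⊕ {u : U // ¬ (u : V) = 0}) :=
    Equiv.sigmaCongrRight (fun U => (Equiv.sumCompl (fun u : U => (u : V) = 0)).symm)
  have e1 : (Σ U : Submodule F V, {u : U // (u : V) = 0} ⊕ {u : U // ¬ (u : V) = 0}) ≃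
      (Σ U : Submodule F V, {u : U // (u : V) = 0}) ⊕
        (Σ U : Submodule F V, {u : U // ¬ (u : V) = 0}) :=
    Equiv.sigmaSumDistrib _ _
  rw [Nat.card_congr (e0.trans e1), Nat.card_sum]
  congr 1
  · -- zero part
    have eU : ∀ U : Submodule F V, {u : U // (u : V) = 0} ≃ PUnit.{1} := fun U =>
      { toFun := fun _ => PUnit.unit
        invFun := fun _ => ⟨0, rfl⟩
        left_inv := fun x => Subtype.ext (Subtype.ext (show (0 : V) = ↑x.1 from x.2.symm))
        right_inv := fun _ => rfl }
    have e2 : (Σ U : Submodule F V, {u : U // (u : V) = 0}) ≃ Submodule F V :=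
      (Equiv.sigmaCongrRight eU).trans (Equiv.sigmaPUnit _)
    exact Nat.card_congr e2
  · -- nonzero part
    have e3 : (Σ U : Submodule F V, {u : U // ¬ (u : V) = 0}) ≃
        (Σ v : {v : V // ¬ v = 0}, {U : Submodule F V // (v : V) ∈ U}) :=
      { toFun := fun p => ⟨⟨(p.2.1 : V), p.2.2⟩, ⟨p.1, p.2.1.2⟩⟩
        invFun := fun p => ⟨p.2.1, ⟨⟨(p.1 : V), p.2.2⟩, p.1.2⟩⟩
        left_inv := by rintro ⟨U, ⟨⟨u, hu⟩, h⟩⟩; rfl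
        right_inv := by rintro ⟨⟨v, hv⟩, ⟨U, hU⟩⟩; rfl }
    rw [Nat.card_congr e3]
    letI : Fintype {v : V // ¬ v = 0} := Fintype.ofFinite _
    letI : ∀ v : {v : V // ¬ v = 0}, Fintype {U : Submodule F V // (v : V) ∈ U} :=
      fun v => Fintype.ofFinite _
    rw [Nat.card_eq_fintype_card, Fintype.card_sigma]
    have hterm : ∀ v : {v : V // ¬ v = 0},
        Fintype.card {U : Submodule F V // (v : V) ∈ U} = G (finrank F V - 1) := fun v => by
      rw [← Nat.card_eq_fintype_card]
      exact card_subs_containing v.2 G hG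
    rw [Finset.sum_congr rfl (fun v _ => hterm v), Finset.sum_const, smul_eq_mul,
      Finset.card_univ]
    congr 1
    have hcv : Fintype.card V = Fintype.card F ^ finrank F V := card_eq_pow_finrank
    rw [Fintype.card_subtype_compl, hcv, Fintype.card_subtype_eq (0 : V)]
end Pairs

/-- If `q` is a prime power and `G_k` denotes the number of subspaces of a `k`-dimensional
vector space over the field `F` with `q` elements, then `G_{n+1} = 2G_n + (q^n - 1)G_{n-1}`
for `n ≥ 1`. -/
theorem card_submodule_recursion {F : Type*} [Field F] [Fintype F]
    (G : ℕ → ℕ) (hG : ∀ k, G k = Nat.card (Submodule F (Fin k → F)))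
    (n : ℕ) (hn : 1 ≤ n) :
    G (n + 1) = 2 * G n + (Fintype.card F ^ n - 1) * G (n - 1) := by
  classical
  set φ : (Fin (n+1) → F) →ₗ[F] F := LinearMap.proj (Fin.last n) with hφ
  set e₀ : Fin (n+1) → F := Pi.single (Fin.last n) 1 with he₀
  have he : φ e₀ = 1 := by simp [hφ, he₀]
  have hker : finrank F (LinearMap.ker φ) = n := by
    have h1 := LinearMap.finrank_range_add_finrank_ker φ
    have hr : LinearMap.range φ = ⊤ :=
      LinearMap.range_eq_top.2 (fun a => ⟨a • e₀, by rw [map_smul, he, smul_eq_mul, mul_one]⟩)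
    rw [hr, finrank_top, finrank_self] at h1
    have h2 : finrank F (Fin (n+1) → F) = n + 1 := Module.finrank_fin_fun F
    omega
  rw [hG (n+1), card_split φ e₀ he, card_sigma_quot, card_sigma_self G hG, hker,
    card_submodule_finrank G hG hker]
  ring
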